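/- For every hash sequence of n cars on m places with 1 ≤ n < m, and every k ∈ {1,…,m−1}: H_{V+k} = C_{V+k} − C_V + max_{1≤i≤k} (C_{V−1} − C_{V+i−1})_+, where x_+ = max(x,0). -/

import Mathlib

open MeasureTheory Filter
open scoped BigOperators

attribute [local instance] Classical.propDecidable

namespace Parking

variable {m : ℕ}

/-- Final parking spot of a car whose first try is place `s`, given the set `occ`
of currently occupied places (places are cyclic, i.e. elements of `ZMod m`). -/
noncomputable def spot (occ : Finset (ZMod m)) (s : ZMod m) : ZMod m :=
  if h : ∃ t : ℕ, s + (t : ZMod m) ∉ occ then s + ((Nat.find h : ℕ) : ZMod m) else s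

/-- Set of occupied places after the first `k` cars of the hash sequence `p` have parked. -/
noncomputable def occs (p : ℕ → ZMod m) : ℕ → Finset (ZMod m)
  | 0 => ∅
  | k + 1 => insert (spot (occs p k) (p k)) (occs p k)

/-- Number of consecutive occupied places starting at `x` (0 if `x` is empty). -/
noncomputable def runLen (occ : Finset (ZMod m)) (x : ZMod m) : ℕ :=
  if h : ∃ t : ℕ, x + (t : ZMod m) ∉ occ then Nat.find h else 0

/-- First place of the block of consecutive occupied places containing `x`. -/
noncomputable def blockStart (occ : Finset (ZMod m)) (x : ZMod m) : ZMod m :=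
  if h : ∃ t : ℕ, x - ((t : ZMod m) + 1) ∉ occ then x - ((Nat.find h : ℕ) : ZMod m) else x

/-- Starting places of the blocks of consecutive occupied places. -/
noncomputable def blockStarts (occ : Finset (ZMod m)) : Finset (ZMod m) :=
  occ.filter (fun x => x - 1 ∉ occ)

/-- The multiset of sizes of the blocks of consecutive occupied places. -/
noncomputable def blockSizes (occ : Finset (ZMod m)) : Multiset ℕ :=
  (blockStarts occ).val.map (runLen occ)

/-- `B n p k` : size of the `k`-th largest block (1-indexed, `0` if there are fewer
than `k` blocks) once the `n` first cars of the hash sequence `p` have parked. -/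
noncomputable def B (n : ℕ) (p : ℕ → ZMod m) (k : ℕ) : ℕ :=
  ((Multiset.sort (blockSizes (occs p n)) (· ≤ ·)).reverse).getD (k - 1) 0

/-- `R n p k` : size of the `k`-th block (1-indexed, `0` if there are fewer than `k`
blocks), blocks being sorted by increasing date of birth (increasing order of the first
arrival of a car of the block), once the `n` first cars of `p` have parked. -/
noncomputable def R (n : ℕ) (p : ℕ → ZMod m) (k : ℕ) : ℕ :=
  (((((List.range n).map
        (fun i => blockStart (occs p n) (spot (occs p i) (p i)))).reverse.dedup).reverse).map
      (runLen (occs p n))).getD (k - 1) 0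

/-- Number of places tried by car `i` beyond its first try. -/
noncomputable def offs (p : ℕ → ZMod m) (i : ℕ) : ℕ :=
  if h : ∃ t : ℕ, p i + (t : ZMod m) ∉ occs p i then Nat.find h else 0

/-- `H n p y` : number of cars among the `n` first cars of `p` that tried place `y`,
successfully or not. -/
noncomputable def H (n : ℕ) (p : ℕ → ZMod m) (y : ZMod m) : ℕ :=
  ((Finset.range n).filter (fun i => ∃ t : ℕ, t ≤ offs p i ∧ p i + (t : ZMod m) = y)).card

/-- `Y n p k` : number of cars whose first try is place `k` (periodic in `k`). -/
noncomputable def Y (n : ℕ) (p : ℕ → ZMod m) (k : ℤ) : ℕ :=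
  ((Finset.range n).filter (fun i => p i = (k : ZMod m))).card

/-- `A n p k = Y₁ + ⋯ + Y_k - k n / m`. -/
noncomputable def A (n : ℕ) (p : ℕ → ZMod m) (k : ℕ) : ℝ :=
  (∑ j ∈ Finset.range k, (Y n p (j + 1) : ℝ)) - (k : ℝ) * n / m

/-- `V n p` : the smallest `j ∈ {1, …, m}` at which `A` attains its minimum over `{1, …, m}`. -/
noncomputable def V (n : ℕ) (p : ℕ → ZMod m) : ℕ :=
  sInf {j | 1 ≤ j ∧ j ≤ m ∧ ∀ i, 1 ≤ i → i ≤ m → A n p j ≤ A n p i}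

/-- `C n p k = Y₁ + ⋯ + Y_k - k` for `0 ≤ k ≤ m`, extended to `ℤ` by `C (k + m) = C k - ℓ`. -/
noncomputable def C (n : ℕ) (p : ℕ → ZMod m) (k : ℤ) : ℤ :=
  ((∑ j ∈ Finset.range (k.emod m).toNat, (Y n p (j + 1) : ℤ)) - ((k.emod m).toNat : ℤ))
    - k.ediv m * ((m : ℤ) - (n : ℤ))

/-- Extension of a hash sequence `Fin n → Fin m` to a map `ℕ → ZMod m`. -/
def ext (m n : ℕ) (p : Fin n → Fin m) : ℕ → ZMod m :=
  fun i => if h : i < n then (((p ⟨i, h⟩) : ℕ) : ZMod m) else 0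

/-- Probability of an event under the uniform distribution on the `m ^ n` hash sequences. -/
noncomputable def parkProb (m n : ℕ) (ev : (ℕ → ZMod m) → Prop) : ℝ :=
  ((Finset.univ.filter (fun p : Fin n → Fin m => ev (ext m n p))).card : ℝ) / (m : ℝ) ^ n

/-- Expectation of a random variable under the uniform distribution on hash sequences. -/
noncomputable def parkExp (m n : ℕ) (X : (ℕ → ZMod m) → ℝ) : ℝ :=
  (∑ p : Fin n → Fin m, X (ext m n p)) / (m : ℝ) ^ n

/-- `φ(M,N,K) = binom(N−1,K−1) (K+1)^{K−1} M (M−K−1)^{N−K−1} (M−N−1) / M^N`. -/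
noncomputable def phi (M N K : ℕ) : ℝ :=
  (Nat.choose (N - 1) (K - 1) : ℝ) * ((K : ℝ) + 1) ^ (K - 1) * (M : ℝ)
      * ((M - K - 1 : ℕ) : ℝ) ^ (N - K - 1) * ((M - N - 1 : ℕ) : ℝ) / (M : ℝ) ^ N

/-- The density `f(λ,x) = (λ/√(2π)) x^{−1/2} (1−x)^{−3/2} exp(−λ²x/(2(1−x)))` on `(0,1)`. -/
noncomputable def fdens (l x : ℝ) : ℝ :=
  if 0 < x ∧ x < 1 then
    l / Real.sqrt (2 * Real.pi) * x ^ (-(1 : ℝ) / 2) * (1 - x) ^ (-(3 : ℝ) / 2)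
      * Real.exp (-(l ^ 2 * x) / (2 * (1 - x)))
  else 0


section Dev
variable {n : ℕ} {p : ℕ → ZMod m}

lemma emod_eq (a b : ℤ) : a.emod b = a % b := rfl
lemma ediv_eq (a b : ℤ) : a.ediv b = a / b := rfl

lemma exists_free (hm : 0 < m) {occ : Finset (ZMod m)} (h : occ.card < m) (s : ZMod m) :
    ∃ t : ℕ, t < m ∧ s + (t : ZMod m) ∉ occ := by
  haveI : NeZero m := ⟨hm.ne'⟩
  have : ∃ x : ZMod m, x ∉ occ := by
    by_contra hc
    push_neg at hc
    have h1 : (Finset.univ : Finset (ZMod m)) ⊆ occ := fun x _ => hc x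
    have := Finset.card_le_card h1
    rw [Finset.card_univ, ZMod.card] at this
    omega
  obtain ⟨x, hx⟩ := this
  refine ⟨(x - s).val, ZMod.val_lt _, ?_⟩
  rwa [ZMod.natCast_val, ZMod.cast_id', id_eq, add_sub_cancel]

lemma card_occs (hn : n ≤ m) : ∀ i, i ≤ n → (occs p i).card = i := by
  intro i
  induction i with
  | zero => intro _; simp [occs]
  | succ i ih =>
    intro hi
    have hci : (occs p i).card = i := ih (by omega)
    have hm : 0 < m := by omega
    obtain ⟨t, _, ht⟩ := exists_free hm (by omega : (occs p i).card < m) (p i)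
    have hex : ∃ t : ℕ, p i + (t : ZMod m) ∉ occs p i := ⟨t, ht⟩
    have hs : spot (occs p i) (p i) ∉ occs p i := by
      rw [spot, dif_pos hex]; exact Nat.find_spec hex
    rw [occs, Finset.card_insert_of_notMem hs, hci]

lemma mem_occs_iff {x : ZMod m} : ∀ {j : ℕ},
    x ∈ occs p j ↔ ∃ i, i < j ∧ spot (occs p i) (p i) = x := by
  intro j
  induction j with
  | zero => simp [occs]
  | succ j ih =>
    rw [occs]
    simp only [Finset.mem_insert, ih]
    constructor
    · rintro (h | ⟨i, hi, hs⟩)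
      · exact ⟨j, by omega, h.symm⟩
      · exact ⟨i, by omega, hs⟩
    · rintro ⟨i, hi, hs⟩
      rcases Nat.lt_succ_iff_lt_or_eq.mp hi with h | h
      · exact Or.inr ⟨i, h, hs⟩
      · exact Or.inl (by rw [← hs, h])

variable (hn : n < m)
include hn

lemma occs_ex {i : ℕ} (hi : i < n) : ∃ t : ℕ, p i + (t : ZMod m) ∉ occs p i := by
  have := card_occs (n := n) (p := p) (le_of_lt hn) i (le_of_lt hi)
  obtain ⟨t, _, ht⟩ := exists_free (by omega) (by omega : (occs p i).card < m) (p i)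
  exact ⟨t, ht⟩

lemma spot_eq {i : ℕ} (hi : i < n) :
    spot (occs p i) (p i) = p i + ((offs p i : ℕ) : ZMod m) := by
  rw [spot, offs, dif_pos (occs_ex hn hi), dif_pos (occs_ex hn hi)]

lemma offs_spec {i : ℕ} (hi : i < n) : p i + ((offs p i : ℕ) : ZMod m) ∉ occs p i := by
  rw [offs, dif_pos (occs_ex hn hi)]; exact Nat.find_spec (occs_ex hn hi)

lemma offs_min {i t : ℕ} (hi : i < n) (ht : t < offs p i) : p i + (t : ZMod m) ∈ occs p i := by
  rw [offs, dif_pos (occs_ex hn hi)] at ht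
  have := Nat.find_min (occs_ex hn hi) ht
  simpa using this

lemma offs_lt {i : ℕ} (hi : i < n) : offs p i < m := by
  have := card_occs (n := n) (p := p) (le_of_lt hn) i (le_of_lt hi)
  obtain ⟨t, htm, ht⟩ := exists_free (by omega) (by omega : (occs p i).card < m) (p i)
  have : offs p i ≤ t := by
    rw [offs, dif_pos (occs_ex hn hi)]
    exact Nat.find_le ht
  omega

lemma spot_not_mem {i : ℕ} (hi : i < n) : spot (occs p i) (p i) ∉ occs p i := by
  rw [spot_eq hn hi]; exact offs_spec hn hi

lemma tries_iff_parks {y : ZMod m} :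
    (∃ i, i < n ∧ ∃ t : ℕ, t ≤ offs p i ∧ p i + (t : ZMod m) = y) ↔
      (∃ i, i < n ∧ spot (occs p i) (p i) = y) := by
  constructor
  · rintro ⟨i, hi, t, ht, hy⟩
    rcases eq_or_lt_of_le ht with h | h
    · exact ⟨i, hi, by rw [spot_eq hn hi, ← h, hy]⟩
    · have : y ∈ occs p i := by rw [← hy]; exact offs_min hn hi h
      obtain ⟨j, hj, hs⟩ := mem_occs_iff.mp this
      exact ⟨j, by omega, hs⟩
  · rintro ⟨i, hi, hs⟩
    exact ⟨i, hi, offs p i, le_refl _, by rw [← spot_eq hn hi, hs]⟩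

lemma parks_card_le_one (y : ZMod m) :
    ((Finset.range n).filter (fun i => spot (occs p i) (p i) = y)).card ≤ 1 := by
  rw [Finset.card_le_one]
  intro a ha b hb
  simp only [Finset.mem_filter, Finset.mem_range] at ha hb
  by_contra hab
  rcases Nat.lt_or_ge a b with h | h
  · have h3 : spot (occs p b) (p b) ∈ occs p b := by
      rw [hb.2]; exact mem_occs_iff.mpr ⟨a, h, ha.2⟩
    exact spot_not_mem hn hb.1 h3
  · have hba : b < a := by omega
    have h3 : spot (occs p a) (p a) ∈ occs p a := by
      rw [ha.2]; exact mem_occs_iff.mpr ⟨b, hba, hb.2⟩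
    exact spot_not_mem hn ha.1 h3

/-- The fundamental recursion `H(y+1) = Y(y+1) + (H(y) - 1)₊`. -/
lemma H_succ (y : ZMod m) :
    (H n p (y + 1) : ℤ) =
      (((Finset.range n).filter (fun i => p i = y + 1)).card : ℤ)
        + max ((H n p y : ℤ) - 1) 0 := by
  classical
  haveI : NeZero m := ⟨by omega⟩
  set T : ZMod m → Finset ℕ := fun z =>
    (Finset.range n).filter (fun i => ∃ t : ℕ, t ≤ offs p i ∧ p i + (t : ZMod m) = z) with hT
  set P : Finset ℕ := (Finset.range n).filter (fun i => spot (occs p i) (p i) = y) with hP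
  have hPT : P ⊆ T y := by
    intro i hi
    simp only [hP, hT, Finset.mem_filter, Finset.mem_range] at hi ⊢
    exact ⟨hi.1, offs p i, le_refl _, by rw [← spot_eq hn hi.1, hi.2]⟩
  have key : T (y + 1) = ((Finset.range n).filter (fun i => p i = y + 1)) ∪ (T y \ P) := by
    ext i
    simp only [hT, hP, Finset.mem_union, Finset.mem_sdiff, Finset.mem_filter, Finset.mem_range]
    constructor
    · rintro ⟨hi, t, ht, hy⟩
      rcases Nat.eq_zero_or_pos t with h0 | h0
      · subst h0; push_cast at hy; rw [add_zero] at hy; exact Or.inl ⟨hi, hy⟩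
      · have h2' : p i + ((t - 1 : ℕ) : ZMod m) + 1 = y + 1 := by
          rw [← hy]
          conv_rhs => rw [(by omega : t = (t - 1) + 1)]
          push_cast
          ring
        have hts : p i + ((t - 1 : ℕ) : ZMod m) = y := add_right_cancel h2'
        have htlt : t - 1 < offs p i := by omega
        refine Or.inr ⟨⟨hi, t - 1, by omega, hts⟩, ?_⟩
        rintro ⟨-, hs⟩
        have hmem : y ∈ occs p i := by rw [← hts]; exact offs_min hn hi htlt
        rw [← hs] at hmem
        exact spot_not_mem hn hi hmem
    · rintro (⟨hi, hp⟩ | ⟨⟨hi, t, ht, hy⟩, hns⟩)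
      · exact ⟨hi, 0, by simp [hp]⟩
      · have htlt : t < offs p i := by
          rcases eq_or_lt_of_le ht with h | h
          · exfalso; exact hns ⟨hi, by rw [spot_eq hn hi, ← h, hy]⟩
          · exact h
        refine ⟨hi, t + 1, by omega, ?_⟩
        push_cast
        rw [← add_assoc, hy]
  have hdisj : Disjoint ((Finset.range n).filter (fun i => p i = y + 1)) (T y \ P) := by
    rw [Finset.disjoint_left]
    rintro i hi hi2
    simp only [Finset.mem_filter, Finset.mem_range] at hi
    simp only [hT, hP, Finset.mem_sdiff, Finset.mem_filter, Finset.mem_range] at hi2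
    obtain ⟨⟨-, t, ht, hy⟩, hns⟩ := hi2
    have htlt : t < offs p i := by
      rcases eq_or_lt_of_le ht with h | h
      · exact absurd ⟨hi.1, by rw [spot_eq hn hi.1, ← h, hy]⟩ hns
      · exact h
    have hpp : p i + ((t + 1 : ℕ) : ZMod m) = p i := by
      push_cast
      rw [← add_assoc, hy, ← hi.2]
    have h0 : ((t + 1 : ℕ) : ZMod m) = 0 := by
      rwa [← sub_eq_zero, add_sub_cancel_left] at hpp
    rw [ZMod.natCast_eq_zero_iff] at h0
    have h5 : offs p i < m := offs_lt hn hi.1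
    have h6 : m ≤ t + 1 := Nat.le_of_dvd (by omega) h0
    omega
  have hH1 : H n p (y + 1) = (T (y + 1)).card := rfl
  have hHy : H n p y = (T y).card := rfl
  rw [hH1, key, Finset.card_union_of_disjoint hdisj, Finset.card_sdiff_of_subset hPT]
  rcases Nat.eq_zero_or_pos (H n p y) with h0 | h0
  · have hTy0 : (T y).card = 0 := by rw [← hHy]; exact h0
    have hP0 : P.card = 0 := by
      have := Finset.card_le_card hPT
      omega
    rw [hHy, hTy0, hP0]
    push_cast
    omega
  · have hPpos : 0 < P.card := by
      rw [Finset.card_pos]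
      have h0' : (T y).Nonempty := Finset.card_pos.mp (by rw [← hHy]; exact h0)
      obtain ⟨i, hi⟩ := h0'
      simp only [hT, Finset.mem_filter, Finset.mem_range] at hi
      obtain ⟨j, hj, hs⟩ := (tries_iff_parks hn).mp ⟨i, hi.1, hi.2⟩
      exact ⟨j, by simp only [hP, Finset.mem_filter, Finset.mem_range]; exact ⟨hj, hs⟩⟩
    have hP1 : P.card = 1 := le_antisymm (parks_card_le_one hn y) hPpos
    have hTpos : 1 ≤ (T y).card := by rw [← hHy]; exact le_trans hPpos (by rw [hHy] at *; exact Finset.card_le_card hPT)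
    rw [hHy, hP1]
    push_cast [Nat.cast_sub hTpos]
    omega

lemma H_eq_zero_of_not_occ {y : ZMod m} (hy : y ∉ occs p n) : H n p y = 0 := by
  rw [H, Finset.card_eq_zero, Finset.filter_eq_empty_iff]
  rintro i hi ⟨t, ht, hty⟩
  simp only [Finset.mem_range] at hi
  obtain ⟨j, hj, hs⟩ := (tries_iff_parks hn).mp ⟨i, hi, t, ht, hty⟩
  exact hy (mem_occs_iff.mpr ⟨j, hj, hs⟩)

omit hn in
lemma Y_eq_zero_of_H {y : ZMod m} (k : ℤ) (hky : (k : ZMod m) = y) (hy : H n p y = 0) :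
    Y n p k = 0 := by
  rw [H, Finset.card_eq_zero, Finset.filter_eq_empty_iff] at hy
  rw [Y, Finset.card_eq_zero, Finset.filter_eq_empty_iff]
  intro i hi hp
  exact hy hi ⟨0, by simp [hp, hky]⟩

lemma sum_Y : ∑ j ∈ Finset.range m, Y n p (j + 1) = n := by
  classical
  haveI : NeZero m := ⟨by omega⟩
  have h1 : (Finset.range n).card = ∑ y ∈ (Finset.univ : Finset (ZMod m)),
      ((Finset.range n).filter (fun i => p i = y)).card :=
    Finset.card_eq_sum_card_fiberwise (fun x _ => Finset.mem_univ _)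
  have h2 : ∑ j ∈ Finset.range m, Y n p (j + 1)
      = ∑ y ∈ (Finset.univ : Finset (ZMod m)),
          ((Finset.range n).filter (fun i => p i = y)).card := by
    refine Finset.sum_nbij' (fun j => (((j : ℤ) + 1 : ℤ) : ZMod m))
      (fun y => ((y - 1 : ZMod m)).val) (fun a _ => Finset.mem_univ _) ?_ ?_ ?_ ?_
    · intro y _
      simp only [Finset.mem_range]
      exact ZMod.val_lt _
    · intro a ha
      simp only [Finset.mem_range] at ha
      push_cast
      rw [add_sub_cancel_right]
      rw [ZMod.val_natCast_of_lt ha]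
    · intro y _
      push_cast
      rw [ZMod.natCast_val, ZMod.cast_id', id_eq, sub_add_cancel]
    · intro a _
      rfl
  rw [h2, ← h1, Finset.card_range]

lemma C_sub_C (k : ℤ) : C n p k - C n p (k - 1) = (Y n p k : ℤ) - 1 := by
  have hmn : 0 < m := by omega
  have hm : (0:ℤ) < (m:ℤ) := by exact_mod_cast hmn
  have h0 : 0 ≤ k % (m:ℤ) := Int.emod_nonneg k (by omega)
  have h1 : k % (m:ℤ) < m := Int.emod_lt_of_pos k hm
  have hk : (m:ℤ) * (k / m) + k % m = k := Int.mul_ediv_add_emod k m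
  rcases eq_or_lt_of_le h0 with hz | hpos
  · -- k % m = 0
    have hmod : k % (m:ℤ) = 0 := hz.symm
    have hdvd : (m:ℤ) ∣ k := Int.dvd_of_emod_eq_zero hmod
    have hq : (k - 1) / (m:ℤ) = k / m - 1 ∧ (k - 1) % (m:ℤ) = (m:ℤ) - 1 := by
      have := (Int.ediv_emod_unique hm (a := k - 1) (r := (m:ℤ) - 1) (q := k / m - 1)).mpr
        ⟨by linarith, by omega, by omega⟩
      exact ⟨this.1, this.2⟩
    have hYk : Y n p k = Y n p m := by
      rw [Y, Y]
      congr 1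
      apply Finset.filter_congr
      intro i _
      have hcst : ((k : ZMod m)) = ((m : ℤ) : ZMod m) := by
        rw [ZMod.intCast_zmod_eq_zero_iff_dvd k m |>.mpr hdvd]
        simp
      rw [hcst]
    have hsplit2 := Finset.sum_range_succ (fun j => (Y n p ((j : ℤ) + 1) : ℤ)) (m - 1)
    have hm' : m - 1 + 1 = m := by omega
    rw [hm'] at hsplit2
    have hcast2 : ((m - 1 : ℕ) : ℤ) + 1 = (m : ℤ) := by omega
    simp only [hcast2] at hsplit2
    have hsplit : ∑ j ∈ Finset.range m, (Y n p ((j:ℤ)+1) : ℤ) = (n:ℤ) := by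
      exact_mod_cast congrArg (Nat.cast : ℕ → ℤ) (sum_Y (n := n) (p := p) hn)
    have hsum : ∑ j ∈ Finset.range (m - 1), (Y n p ((j:ℤ) + 1) : ℤ)
        = (n : ℤ) - (Y n p m : ℤ) := by omega
    rw [C, C]
    simp only [emod_eq, ediv_eq]
    rw [hmod, hq.1, hq.2]
    have hmt : ((m:ℤ) - 1).toNat = m - 1 := by omega
    rw [hmt, hsum]
    simp only [Int.toNat_zero, Finset.range_zero, Finset.sum_empty]
    have hc3 : ((m - 1 : ℕ) : ℤ) = (m:ℤ) - 1 := by omega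
    rw [hc3, hYk]
    ring
  · -- k % m ≥ 1
    have hq : (k - 1) / (m:ℤ) = k / m ∧ (k - 1) % (m:ℤ) = k % m - 1 := by
      have := (Int.ediv_emod_unique hm (a := k - 1) (r := k % m - 1) (q := k / m)).mpr
        ⟨by linarith, by omega, by omega⟩
      exact ⟨this.1, this.2⟩
    have hYk : Y n p (((k % (m:ℤ) - 1).toNat : ℤ) + 1) = Y n p k := by
      rw [Y, Y]
      congr 1
      apply Finset.filter_congr
      intro i _
      have hcast : (((k % (m:ℤ) - 1).toNat : ℤ) + 1 : ℤ) = k % m := by omega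
      rw [hcast]
      have hcc : (((k % (m:ℤ)) : ℤ) : ZMod m) = ((k : ZMod m)) := by
        push_cast
        ring
      rw [hcc]
    have hsum : (k % (m:ℤ)).toNat = (k % (m:ℤ) - 1).toNat + 1 := by omega
    rw [C, C]
    simp only [emod_eq, ediv_eq]
    rw [hq.1, hq.2, hsum, Finset.sum_range_succ]
    rw [hYk]
    push_cast
    omega

lemma Ct_formula (k : ℤ) :
    (m:ℤ) * C n p k + k * ((m:ℤ) - n)
      = (m:ℤ) * ((∑ j ∈ Finset.range (k % (m:ℤ)).toNat, (Y n p (j + 1) : ℤ)) - k % (m:ℤ))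
          + (k % (m:ℤ)) * ((m:ℤ) - n) := by
  have hk : (m:ℤ) * (k / m) + k % m = k := Int.mul_ediv_add_emod k m
  have h0 : ((k % (m:ℤ)).toNat : ℤ) = k % (m:ℤ) :=
    Int.toNat_of_nonneg (Int.emod_nonneg k (by exact_mod_cast (by omega : m ≠ 0)))
  rw [C]
  simp only [emod_eq, ediv_eq]
  rw [h0]
  linear_combination ((n:ℤ) - m) * hk

lemma Ct_congr {a b : ℤ} (h : a % (m:ℤ) = b % (m:ℤ)) :
    (m:ℤ) * C n p a + a * ((m:ℤ) - n) = (m:ℤ) * C n p b + b * ((m:ℤ) - n) := by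
  rw [Ct_formula hn, Ct_formula hn, h]

lemma V_mem : 1 ≤ V n p ∧ V n p ≤ m ∧ ∀ i, 1 ≤ i → i ≤ m → A n p (V n p) ≤ A n p i := by
  have hne : {j | 1 ≤ j ∧ j ≤ m ∧ ∀ i, 1 ≤ i → i ≤ m → A n p j ≤ A n p i}.Nonempty := by
    obtain ⟨j, hj, hjm⟩ := Finset.exists_min_image (Finset.Icc 1 m) (A n p)
      ⟨m, by simp only [Finset.mem_Icc]; omega⟩
    simp only [Finset.mem_Icc] at hj
    exact ⟨j, hj.1, hj.2, fun i h1 h2 => hjm i (Finset.mem_Icc.mpr ⟨h1, h2⟩)⟩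
  exact Nat.sInf_mem hne

lemma A_eq_Ct {i : ℕ} (hi : i ≤ m) :
    (m:ℝ) * A n p i = (((m:ℤ) * C n p i + (i:ℤ) * ((m:ℤ) - n) : ℤ) : ℝ) := by
  have hm0 : (m:ℝ) ≠ 0 := by
    have : 0 < m := by omega
    positivity
  have hformula := Ct_formula (n := n) (p := p) hn (i : ℤ)
  rcases eq_or_lt_of_le hi with h | h
  · subst h
    have hmod : ((i:ℤ)) % ((i:ℤ)) = 0 := Int.emod_self
    rw [hformula, hmod]
    simp only [Int.toNat_zero, Finset.range_zero, Finset.sum_empty, zero_mul, sub_zero,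
      mul_zero, add_zero]
    have hsum : ∑ j ∈ Finset.range i, (Y n p ((j:ℤ)+1) : ℝ) = (n:ℝ) := by
      exact_mod_cast congrArg (Nat.cast : ℕ → ℝ) (sum_Y (n := n) (p := p) hn)
    rw [A, hsum]
    push_cast
    field_simp
    ring
  · have hmod : ((i:ℤ)) % ((m:ℤ)) = (i:ℤ) :=
      Int.emod_eq_of_lt (Int.natCast_nonneg i) (by exact_mod_cast h)
    rw [hformula, hmod, Int.toNat_natCast, A]
    push_cast
    field_simp
    ring

lemma Ct_min : ∀ j : ℤ,
    (m:ℤ) * C n p (V n p) + (V n p : ℤ) * ((m:ℤ) - n)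
      ≤ (m:ℤ) * C n p j + j * ((m:ℤ) - n) := by
  intro j
  obtain ⟨hV1, hVm, hVmin⟩ := V_mem (n := n) (p := p) hn
  set r : ℤ := (j - 1) % (m:ℤ) with hr
  have hr0 : 0 ≤ r := Int.emod_nonneg _ (by exact_mod_cast (by omega : m ≠ 0))
  have hrm : r < m := Int.emod_lt_of_pos _ (by exact_mod_cast (by omega : 0 < m))
  set i : ℕ := r.toNat + 1 with hi
  have hi1 : 1 ≤ i := by omega
  have him : i ≤ m := by omega
  have hmod : ((i:ℤ)) % (m:ℤ) = j % (m:ℤ) := by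
    have h1 : (i:ℤ) = (j - 1) % m + 1 := by omega
    rw [h1]
    conv_rhs => rw [(by ring : j = (j - 1) + 1)]
    rw [Int.add_emod ((j-1) % m) 1, Int.add_emod (j-1) 1, Int.emod_emod_of_dvd _ dvd_rfl]
  have hA : A n p (V n p) ≤ A n p i := hVmin i hi1 him
  have hA' : (m:ℝ) * A n p (V n p) ≤ (m:ℝ) * A n p i :=
    mul_le_mul_of_nonneg_left hA (by positivity)
  rw [A_eq_Ct hn hVm, A_eq_Ct hn him] at hA'
  have hint : (m:ℤ) * C n p (V n p) + (V n p : ℤ) * ((m:ℤ) - n)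
      ≤ (m:ℤ) * C n p i + (i:ℤ) * ((m:ℤ) - n) := by exact_mod_cast hA'
  calc (m:ℤ) * C n p (V n p) + (V n p : ℤ) * ((m:ℤ) - n)
      ≤ (m:ℤ) * C n p i + (i:ℤ) * ((m:ℤ) - n) := hint
    _ = (m:ℤ) * C n p j + j * ((m:ℤ) - n) := Ct_congr hn hmod

lemma lindley {v : ℕ} (hv : H n p ((v : ℕ) : ZMod m) = 0) (k : ℕ) :
    (H n p (((v + k : ℕ)) : ZMod m) : ℤ)
      = C n p ((v : ℤ) + k) - C n p v
        + (((Finset.Icc 1 k).sup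
            (fun i => (C n p (v : ℤ) + 1 - C n p ((v : ℤ) + i - 1)).toNat) : ℕ) : ℤ) := by
  induction k with
  | zero =>
    simp only [Nat.add_zero, Nat.cast_zero, add_zero]
    rw [hv]
    simp
  | succ k ih =>
    have hcast : (((v + (k+1) : ℕ)) : ZMod m) = (((v + k : ℕ)) : ZMod m) + 1 := by
      push_cast; ring
    rw [hcast, H_succ hn]
    have hYeq : ((Finset.range n).filter (fun i => p i = (((v + k : ℕ)) : ZMod m) + 1)).card
        = Y n p ((v:ℤ) + k + 1) := by
      rw [Y]
      congr 1
      apply Finset.filter_congr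
      intro i _
      have hcc : (((v:ℤ) + k + 1 : ℤ) : ZMod m) = (((v + k : ℕ)) : ZMod m) + 1 := by
        push_cast; ring
      rw [hcc]
    rw [hYeq]
    have hC : C n p ((v:ℤ) + k + 1) - C n p ((v:ℤ) + k) = (Y n p ((v:ℤ) + k + 1) : ℤ) - 1 := by
      have hcc := C_sub_C (n := n) (p := p) hn ((v:ℤ) + k + 1)
      have harg : (v:ℤ) + k + 1 - 1 = (v:ℤ) + k := by ring
      rw [harg] at hcc
      exact hcc
    have hIcc : Finset.Icc 1 (k+1) = insert (k+1) (Finset.Icc 1 k) := by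
      ext x
      simp only [Finset.mem_Icc, Finset.mem_insert]
      omega
    rw [ih]
    rw [hIcc, Finset.sup_insert]
    push_cast [Nat.cast_max]
    rw [show (v:ℤ) + ((k:ℤ) + 1) - 1 = (v:ℤ) + k from by ring]
    rw [show (v:ℤ) + ((k:ℤ) + 1) = (v:ℤ) + k + 1 from by ring]
    set c0 := C n p (v:ℤ)
    set c1 := C n p ((v:ℤ) + k)
    set c2 := C n p ((v:ℤ) + k + 1)
    set s := ((Finset.Icc 1 k).sup
      (fun i => (C n p (v : ℤ) + 1 - C n p ((v : ℤ) + i - 1)).toNat) : ℕ)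
    have hY' : (Y n p ((v:ℤ) + k + 1) : ℤ) = c2 - c1 + 1 := by omega
    rw [hY']
    omega

lemma H_V_eq_zero : H n p ((V n p : ℕ) : ZMod m) = 0 := by
  haveI : NeZero m := ⟨by omega⟩
  have hcard : (occs p n).card = n := card_occs (le_of_lt hn) n (le_refl n)
  have hex : ∃ y : ZMod m, y ∉ occs p n := by
    by_contra hc
    push_neg at hc
    have h1 : (Finset.univ : Finset (ZMod m)) ⊆ occs p n := fun x _ => hc x
    have := Finset.card_le_card h1
    rw [Finset.card_univ, ZMod.card] at this
    omega
  obtain ⟨y, hy⟩ := hex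
  set v0 : ℕ := y.val with hv0
  have hv0cast : ((v0 : ℕ) : ZMod m) = y := by
    rw [hv0, ZMod.natCast_val, ZMod.cast_id', id_eq]
  have hHv0 : H n p ((v0 : ℕ) : ZMod m) = 0 := by
    rw [hv0cast]; exact H_eq_zero_of_not_occ hn hy
  set k : ℕ := (((V n p : ℤ) - v0) % (m:ℤ)).toNat with hk
  have hkm : (k : ℤ) = ((V n p : ℤ) - v0) % (m:ℤ) := by
    rw [hk]
    exact Int.toNat_of_nonneg (Int.emod_nonneg _ (by exact_mod_cast (by omega : m ≠ 0)))
  have hdvd : (m:ℤ) ∣ ((v0:ℤ) + k - V n p) := by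
    have h2 : (m:ℤ) ∣ (((V n p : ℤ) - v0) - k) := Int.dvd_self_sub_of_emod_eq hkm.symm
    obtain ⟨c, hc⟩ := h2
    exact ⟨-c, by linarith⟩
  have hcastVK : (((v0 + k : ℕ)) : ZMod m) = ((V n p : ℕ) : ZMod m) := by
    have h3 : (((v0:ℤ) + k - V n p : ℤ) : ZMod m) = 0 :=
      (ZMod.intCast_zmod_eq_zero_iff_dvd _ m).mpr hdvd
    push_cast at h3
    have h4 := sub_eq_zero.mp h3
    push_cast
    exact h4
  have hmodeq : ((v0:ℤ) + k) % (m:ℤ) = ((V n p : ℤ)) % (m:ℤ) :=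
    Int.emod_eq_emod_iff_emod_sub_eq_zero.mpr (Int.emod_eq_zero_of_dvd hdvd)
  rcases Nat.eq_zero_or_pos k with hk0 | hkpos
  · rw [← hcastVK, hk0, Nat.add_zero]
    exact hHv0
  · have hstrict : ∀ j : ℕ, j < k → C n p ((v0:ℤ) + k) < C n p ((v0:ℤ) + j) := by
      intro j hj
      have h2 := Ct_min (n := n) (p := p) hn ((v0:ℤ) + j)
      rw [← Ct_congr hn hmodeq] at h2
      have hmn : (1:ℤ) ≤ (m:ℤ) - n := by
        have hnm : n < m := hn
        push_cast
        omega
      have hkj : (1:ℤ) ≤ (k:ℤ) - j := by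
        have : j + 1 ≤ k := hj
        push_cast
        omega
      nlinarith [h2, hmn, hkj]
    have hlin := lindley (n := n) (p := p) hn hHv0 k
    rw [hcastVK] at hlin
    have hub : ((Finset.Icc 1 k).sup
        (fun i => (C n p (v0 : ℤ) + 1 - C n p ((v0 : ℤ) + i - 1)).toNat))
          ≤ (C n p (v0:ℤ) - C n p ((v0:ℤ) + k)).toNat := by
      apply Finset.sup_le
      intro i hi
      simp only [Finset.mem_Icc] at hi
      apply Int.toNat_le_toNat
      have harg : (v0:ℤ) + i - 1 = (v0:ℤ) + ((i - 1 : ℕ) : ℤ) := by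
        have : ((i - 1 : ℕ) : ℤ) = (i:ℤ) - 1 := by omega
        rw [this]; ring
      have hst := hstrict (i - 1) (by omega)
      rw [← harg] at hst
      omega
    have hlb : 0 < C n p (v0:ℤ) - C n p ((v0:ℤ) + k) := by
      have hst := hstrict 0 hkpos
      simp only [Nat.cast_zero, add_zero] at hst
      omega
    have hub' : (((Finset.Icc 1 k).sup
        (fun i => (C n p (v0 : ℤ) + 1 - C n p ((v0 : ℤ) + i - 1)).toNat) : ℕ) : ℤ)
          ≤ C n p (v0:ℤ) - C n p ((v0:ℤ) + k) := by
      calc (((Finset.Icc 1 k).sup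
          (fun i => (C n p (v0 : ℤ) + 1 - C n p ((v0 : ℤ) + i - 1)).toNat) : ℕ) : ℤ)
            ≤ ((C n p (v0:ℤ) - C n p ((v0:ℤ) + k)).toNat : ℤ) := by exact_mod_cast hub
        _ = C n p (v0:ℤ) - C n p ((v0:ℤ) + k) := Int.toNat_of_nonneg (by omega)
    omega

end Dev

/-- Skorohod-type representation of the visit counts:
`H_{V+k} = C_{V+k} − C_V + max_{1≤i≤k} (C_{V−1} − C_{V+i−1})₊`.
(For an integer `z`, `z.toNat` is exactly the positive part `z₊`.) -/
theorem H_eq_C_plus_record_term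
    (m n : ℕ) (h1 : 1 ≤ n) (h2 : n < m) (p : ℕ → ZMod m)
    (k : ℕ) (hk : k ∈ Finset.Icc 1 (m - 1)) :
    (H n p (((V n p + k : ℕ)) : ZMod m) : ℤ)
      = C n p ((V n p : ℤ) + k) - C n p (V n p)
        + (((Finset.Icc 1 k).sup
            (fun i => (C n p ((V n p : ℤ) - 1) - C n p ((V n p : ℤ) + i - 1)).toNat) : ℕ) : ℤ) := by
  have hHV : H n p ((V n p : ℕ) : ZMod m) = 0 := H_V_eq_zero h2
  have hky : (((V n p : ℤ)) : ZMod m) = ((V n p : ℕ) : ZMod m) := by push_cast; rfl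
  have hYV : Y n p (V n p : ℤ) = 0 := Y_eq_zero_of_H (V n p : ℤ) hky hHV
  have hC1 : C n p ((V n p : ℤ) - 1) = C n p (V n p : ℤ) + 1 := by
    have hcc := C_sub_C (n := n) (p := p) h2 (V n p : ℤ)
    rw [hYV] at hcc
    push_cast at hcc
    omega
  have hlin := lindley (n := n) (p := p) h2 hHV k
  rw [hlin]
  congr 2
  apply Finset.sup_congr rfl
  intro i _
  rw [hC1]
end Parking
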